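/- For any positive integers n, k, one has Im(G_k(n)) ≡ 0 (mod n), unless n ≡ 2 (mod 4) and k > 1 is odd, in which case Im(G_k(n)) ≡ n/2 (mod n). -/

import Mathlib

/-- The Gaussian power sum `G_k(n) = ∑_{1 ≤ a, b ≤ n} (a + b·i)^k` in `ℤ[i]`. -/
def Gsum (k n : ℕ) : GaussianInt :=
  ∑ a ∈ Finset.Icc 1 n, ∑ b ∈ Finset.Icc 1 n, (⟨(a : ℤ), (b : ℤ)⟩ : GaussianInt) ^ k

namespace ImGsumAux

open Finset

/-- The imaginary unit in `ℤ[i]`. -/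
def ii : GaussianInt := ⟨0, 1⟩

/-- The imaginary part of `(a + b i)^k`. -/
def g (k a b : ℕ) : ℤ := ((⟨(a : ℤ), (b : ℤ)⟩ : GaussianInt) ^ k).im

/-- The power sum `∑_{a=1}^n a^t`. -/
def S (n t : ℕ) : ℤ := ∑ a ∈ Finset.Icc 1 n, (a : ℤ) ^ t

/-- The quantity with `∑_a Im((a + m i)^k) = m * J k n m`. -/
def J (k n m : ℕ) : ℤ :=
  ∑ j ∈ range (k + 1), (k.choose j : ℤ) * (m : ℤ) ^ (j - 1) * (ii ^ j).im * S n (k - j)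

lemma im_sum {α : Type*} (s : Finset α) (f : α → GaussianInt) :
    (∑ x ∈ s, f x).im = ∑ x ∈ s, (f x).im := by
  classical
  induction s using Finset.induction with
  | empty => simp
  | insert _ _ h ih => simp [Finset.sum_insert h, Zsqrtd.im_add, ih]

lemma dvd_im_pow_sub {n : ℕ} {z w : GaussianInt} (h : ((n : ℤ) : GaussianInt) ∣ z - w) (k : ℕ) :
    (n : ℤ) ∣ (z ^ k).im - (w ^ k).im := by
  have h2 : ((n : ℤ) : GaussianInt) ∣ z ^ k - w ^ k := h.trans (sub_dvd_pow_sub_pow z w k)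
  have := ((Zsqrtd.intCast_dvd (n : ℤ) _).1 h2).2
  simpa [Zsqrtd.im_sub] using this

lemma g_zero (k a : ℕ) : g k a 0 = 0 := by
  have : (⟨(a : ℤ), ((0 : ℕ) : ℤ)⟩ : GaussianInt) = ((a : ℤ) : GaussianInt) := by
    ext <;> simp [Zsqrtd.re_intCast, Zsqrtd.im_intCast]
  rw [g, this, ← Int.cast_pow, Zsqrtd.im_intCast]

lemma conj_pair {n : ℕ} (k a b : ℕ) (hb : b ≤ n) : (n : ℤ) ∣ g k a (n - b) + g k a b := by
  have key : ((n : ℤ) : GaussianInt) ∣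
      (⟨(a : ℤ), ((n - b : ℕ) : ℤ)⟩ : GaussianInt) - star (⟨(a : ℤ), (b : ℤ)⟩ : GaussianInt) := by
    have : (⟨(a : ℤ), ((n - b : ℕ) : ℤ)⟩ : GaussianInt) - star (⟨(a : ℤ), (b : ℤ)⟩ : GaussianInt)
        = ((n : ℤ) : GaussianInt) * ii := by
      ext <;> simp [ii, Zsqrtd.star_mk, Zsqrtd.re_sub, Zsqrtd.im_sub, Zsqrtd.re_mul,
        Zsqrtd.im_mul, Zsqrtd.re_intCast, Zsqrtd.im_intCast, Int.ofNat_sub hb]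
    rw [this]; exact Dvd.intro _ rfl
  have h := dvd_im_pow_sub key k
  rw [← star_pow, Zsqrtd.im_star, sub_neg_eq_add] at h
  exact h

lemma row_reduce {n : ℕ} (hn : 0 < n) (k a : ℕ) :
    (n : ℤ) ∣ (∑ b ∈ Icc 1 n, g k a b) - (if 2 ∣ n then g k a (n / 2) else 0) := by
  set m := n / 2 with hm
  have hmn : m ≤ n := Nat.div_le_self n 2
  have hsplit : (∑ b ∈ Ioc 0 m, g k a b) + (∑ b ∈ Ioc m n, g k a b) = ∑ b ∈ Icc 1 n, g k a b := by
    have hIcc : Icc 1 n = Ioc 0 n := by ext x; simp only [mem_Icc, mem_Ioc]; omega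
    rw [hIcc, Finset.sum_Ioc_consecutive _ (Nat.zero_le m) hmn]
  have hre : (∑ b ∈ Ioc m n, g k a b) = ∑ c ∈ range (n - m), g k a (n - c) := by
    apply Finset.sum_nbij' (fun b => n - b) (fun c => n - c)
    · intro b hb; simp only [mem_Ioc] at hb; simp only [mem_range]; omega
    · intro c hc; simp only [mem_range] at hc; simp only [mem_Ioc]; omega
    · intro b hb; simp only [mem_Ioc] at hb; omega
    · intro c hc; simp only [mem_range] at hc; omega
    · intro b hb; simp only [mem_Ioc] at hb; rw [Nat.sub_sub_self hb.2]
  have hdvd : (n : ℤ) ∣ ∑ c ∈ range (n - m), (g k a (n - c) + g k a c) := by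
    apply Finset.dvd_sum
    intro c hc
    simp only [mem_range] at hc
    exact conj_pair k a c (by omega)
  have hkey : (∑ b ∈ Icc 1 n, g k a b) - (if 2 ∣ n then g k a m else 0)
      = (∑ c ∈ range (n - m), (g k a (n - c) + g k a c))
        + ((∑ b ∈ Ioc 0 m, g k a b) - (∑ c ∈ range (n - m), g k a c)
           - (if 2 ∣ n then g k a m else 0)) := by
    rw [← hsplit, hre, Finset.sum_add_distrib]; ring
  rw [hkey]
  apply dvd_add hdvd
  rcases Nat.even_or_odd n with he | ho
  · -- n even : n = 2m and n - m = m, with m ≥ 1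
    have h2 : 2 ∣ n := he.two_dvd
    have hn2 : n = 2 * m := by omega
    rw [if_pos h2]
    have hr : (∑ c ∈ range (n - m), g k a c) = g k a 0 + ∑ b ∈ Ioc 0 (m - 1), g k a b := by
      have : range (n - m) = insert 0 (Ioc 0 (m - 1)) := by
        ext x; simp only [mem_range, mem_insert, mem_Ioc]; omega
      rw [this, Finset.sum_insert (by simp)]
    have hA : (∑ b ∈ Ioc 0 m, g k a b) = (∑ b ∈ Ioc 0 (m - 1), g k a b) + g k a m := by
      have : m = (m - 1) + 1 := by omega
      rw [this, Finset.sum_Ioc_succ_top (Nat.zero_le _), ← this]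
    rw [hr, hA, g_zero]
    ring_nf
    exact dvd_zero _
  · -- n odd : n - m = m + 1
    rw [Nat.odd_iff] at ho
    have h2 : ¬ (2 ∣ n) := by omega
    rw [if_neg h2]
    have hr : (∑ c ∈ range (n - m), g k a c) = g k a 0 + ∑ b ∈ Ioc 0 m, g k a b := by
      have : range (n - m) = insert 0 (Ioc 0 m) := by
        ext x; simp only [mem_range, mem_insert, mem_Ioc]; omega
      rw [this, Finset.sum_insert (by simp)]
    rw [hr, g_zero]
    ring_nf
    exact dvd_zero _

lemma g_expand (k a m : ℕ) :
    g k a m = ∑ j ∈ range (k + 1),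
      ((k.choose j : ℤ) * (m : ℤ) ^ j * (ii ^ j).im) * (a : ℤ) ^ (k - j) := by
  have hz : (⟨(a : ℤ), (m : ℤ)⟩ : GaussianInt)
      = ((m : ℤ) : GaussianInt) * ii + ((a : ℤ) : GaussianInt) := by
    ext <;> simp [ii, Zsqrtd.re_add, Zsqrtd.im_add, Zsqrtd.re_mul, Zsqrtd.im_mul,
      Zsqrtd.re_intCast, Zsqrtd.im_intCast]
  rw [g, hz, add_pow, im_sum]
  apply Finset.sum_congr rfl
  intro j hj
  have : ((m : ℤ) * ii) ^ j * ((a : ℤ) : GaussianInt) ^ (k - j) * (k.choose j : GaussianInt)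
      = (((k.choose j : ℤ) * (m : ℤ) ^ j * (a : ℤ) ^ (k - j) : ℤ) : GaussianInt) * ii ^ j := by
    push_cast
    ring
  rw [this, Zsqrtd.im_smul]
  ring

lemma I_eq (k n m : ℕ) : (∑ a ∈ Icc 1 n, g k a m) = (m : ℤ) * J k n m := by
  have h1 : (∑ a ∈ Icc 1 n, g k a m)
      = ∑ j ∈ range (k + 1), ((k.choose j : ℤ) * (m : ℤ) ^ j * (ii ^ j).im) * S n (k - j) := by
    simp only [g_expand, S]
    rw [Finset.sum_comm]
    apply Finset.sum_congr rfl
    intro j _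
    rw [Finset.mul_sum]
  rw [h1, J, Finset.mul_sum]
  apply Finset.sum_congr rfl
  intro j _
  rcases Nat.eq_zero_or_pos j with hj | hj
  · subst hj
    simp [pow_zero, show ((1 : GaussianInt)).im = 0 from rfl]
  · have : (m : ℤ) ^ j = (m : ℤ) * (m : ℤ) ^ (j - 1) := by
      conv_lhs => rw [show j = 1 + (j - 1) by omega]
      rw [pow_add, pow_one]
    rw [this]; ring

lemma two_zmod2 : (2 : ZMod 2) = 0 := rfl

lemma ii_sq : ii ^ 2 = -1 := by
  ext <;> simp [ii, pow_two, Zsqrtd.re_mul, Zsqrtd.im_mul]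

lemma ii_pow_im_mod2 (j : ℕ) : (((ii ^ j).im : ℤ) : ZMod 2) = if Odd j then 1 else 0 := by
  rcases Nat.even_or_odd j with he | ho
  · obtain ⟨q, hq⟩ := he
    have : ii ^ j = (((-1 : ℤ) ^ q : ℤ) : GaussianInt) := by
      rw [hq, show q + q = 2 * q by ring, pow_mul, ii_sq]
      push_cast; ring
    rw [this, Zsqrtd.im_intCast]
    simp [Nat.not_odd_iff_even.mpr ⟨q, hq⟩]
  · obtain ⟨q, hq⟩ := ho
    have : ii ^ j = (((-1 : ℤ) ^ q : ℤ) : GaussianInt) * ii := by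
      rw [hq, pow_add, pow_mul, ii_sq, pow_one]
      push_cast; ring
    rw [this, Zsqrtd.im_smul, if_pos ⟨q, hq⟩]
    rw [show (ii).im = 1 from rfl, mul_one]
    push_cast
    rw [show ((-1 : ZMod 2)) = 1 by decide, one_pow]

lemma gauss_sum {n m : ℕ} (hn : n = 2 * m) : (∑ a ∈ Icc 1 n, a) = m * (2 * m + 1) := by
  have hr : range (n + 1) = insert 0 (Icc 1 n) := by
    ext x; simp only [mem_range, mem_insert, mem_Icc]; omega
  have h2 : (∑ a ∈ Icc 1 n, a) * 2 = (n + 1) * n := by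
    have := Finset.sum_range_id_mul_two (n + 1)
    rw [hr, Finset.sum_insert (by simp)] at this
    simpa using this
  apply Nat.eq_of_mul_eq_mul_right (show 0 < 2 by norm_num)
  rw [h2, hn]; ring

lemma S_mod2 {n m : ℕ} (hn : n = 2 * m) (t : ℕ) :
    ((S n t : ℤ) : ZMod 2) = if t = 0 then 0 else (m : ZMod 2) := by
  rcases Nat.eq_zero_or_pos t with ht | ht
  · subst ht
    simp only [S, pow_zero, Finset.sum_const, Nat.card_Icc, Nat.add_sub_cancel, nsmul_eq_mul,
      mul_one, if_pos rfl]
    rw [hn]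
    push_cast
    rw [two_zmod2]
    ring
  · rw [if_neg (by omega)]
    have hx : ∀ x : ZMod 2, x ^ t = x := by
      intro x
      fin_cases x
      · exact zero_pow (by omega : t ≠ 0)
      · exact one_pow t
    have h1 : ((S n t : ℤ) : ZMod 2) = ∑ a ∈ Icc 1 n, ((a : ℕ) : ZMod 2) := by
      rw [S]
      push_cast
      exact Finset.sum_congr rfl fun a _ => hx _
    rw [h1, ← Nat.cast_sum, gauss_sum hn]
    push_cast
    rw [two_zmod2]
    ring

lemma choose_odd_sum {k : ℕ} (hk : 0 < k) :
    (∑ j ∈ range (k + 1), if Odd j then (k.choose j : ℤ) else 0) = 2 ^ (k - 1) := by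
  have halt : (∑ j ∈ range (k + 1), (-1 : ℤ) ^ j * k.choose j) = 0 :=
    Int.alternating_sum_range_choose_of_ne (by omega)
  have hall : (∑ j ∈ range (k + 1), (k.choose j : ℤ)) = 2 ^ k := by
    have := Nat.sum_range_choose k
    exact_mod_cast congrArg (Nat.cast : ℕ → ℤ) this
  have h2 : 2 * (∑ j ∈ range (k + 1), if Odd j then (k.choose j : ℤ) else 0) = 2 * 2 ^ (k - 1) := by
    have hsplit : 2 * (∑ j ∈ range (k + 1), if Odd j then (k.choose j : ℤ) else 0)
        = (∑ j ∈ range (k + 1), (k.choose j : ℤ))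
          - (∑ j ∈ range (k + 1), (-1 : ℤ) ^ j * k.choose j) := by
      rw [← Finset.sum_sub_distrib, Finset.mul_sum]
      apply Finset.sum_congr rfl
      intro j _
      rcases Nat.even_or_odd j with he | ho
      · rw [if_neg (Nat.not_odd_iff_even.mpr he), he.neg_one_pow]; ring
      · rw [if_pos ho, ho.neg_one_pow]; ring
    rw [hsplit, halt, hall, sub_zero, ← pow_succ']
    congr 1
    omega
  exact mul_left_cancel₀ (by norm_num) h2

lemma J_cast (k n m : ℕ) : ((J k n m : ℤ) : ZMod 2)
    = ∑ j ∈ range (k + 1), (k.choose j : ZMod 2) * (m : ZMod 2) ^ (j - 1)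
        * (((ii ^ j).im : ℤ) : ZMod 2) * ((S n (k - j) : ℤ) : ZMod 2) := by
  rw [J]
  push_cast
  rfl

lemma J_even_case {k n m : ℕ} (hn : n = 2 * m) (hm : 2 ∣ m) :
    ((J k n m : ℤ) : ZMod 2) = 0 := by
  have hm0 : (m : ZMod 2) = 0 := (ZMod.natCast_eq_zero_iff m 2).mpr hm
  rw [J_cast]
  apply Finset.sum_eq_zero
  intro j hj
  match j with
  | 0 =>
    rw [ii_pow_im_mod2]
    simp
  | 1 =>
    rw [S_mod2 hn, hm0]
    rcases Nat.eq_zero_or_pos (k - 1) with h | h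
    · rw [if_pos h]; ring
    · rw [if_neg (by omega)]; ring
  | (j + 2) =>
    rw [hm0, zero_pow (by omega : j + 2 - 1 ≠ 0)]
    ring

lemma J_odd_case {k n m : ℕ} (hk : 0 < k) (hn : n = 2 * m) (hm : ¬ 2 ∣ m) :
    ((J k n m : ℤ) : ZMod 2)
      = (((2 : ℤ) ^ (k - 1) - if Odd k then 1 else 0 : ℤ) : ZMod 2) := by
  have hm1 : (m : ZMod 2) = 1 := by
    have h1 : m % 2 = 1 := by omega
    rw [← ZMod.natCast_mod, h1, Nat.cast_one]
  -- step 1: the cast of J equals the cast of A'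
  have hstep : ((J k n m : ℤ) : ZMod 2)
      = ((∑ j ∈ range (k + 1), if Odd j ∧ j ≠ k then (k.choose j : ℤ) else 0 : ℤ) : ZMod 2) := by
    rw [J_cast]
    push_cast
    apply Finset.sum_congr rfl
    intro j hj
    simp only [mem_range] at hj
    rw [hm1, one_pow, ii_pow_im_mod2, S_mod2 hn, hm1]
    by_cases ho : Odd j
    · by_cases hjk : j = k
      · rw [if_pos ho, if_pos (show k - j = 0 by omega),
          if_neg (show ¬(Odd j ∧ j ≠ k) from fun h => h.2 hjk)]
        ring
      · rw [if_pos ho, if_neg (show ¬(k - j = 0) by omega),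
          if_pos (show Odd j ∧ j ≠ k from ⟨ho, hjk⟩)]
        ring
    · rw [if_neg ho, if_neg (show ¬(Odd j ∧ j ≠ k) from fun h => ho h.1)]
      ring
  -- step 2: evaluate A' in ℤ
  have hA' : (∑ j ∈ range (k + 1), if Odd j ∧ j ≠ k then (k.choose j : ℤ) else 0)
      = 2 ^ (k - 1) - (if Odd k then 1 else 0) := by
    have hsplit : ∀ j ∈ range (k + 1),
        (if Odd j then (k.choose j : ℤ) else 0)
          = (if Odd j ∧ j ≠ k then (k.choose j : ℤ) else 0)
            + (if j = k then (if Odd j then (k.choose j : ℤ) else 0) else 0) := by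
      intro j _
      by_cases ho : Odd j <;> by_cases hjk : j = k <;> simp [ho, hjk]
    have h2 := choose_odd_sum hk
    rw [Finset.sum_congr rfl hsplit, Finset.sum_add_distrib,
      Finset.sum_ite_eq' (range (k + 1)) k
        (fun j => if Odd j then (k.choose j : ℤ) else 0),
      if_pos (by simp : k ∈ range (k + 1)), Nat.choose_self, Nat.cast_one] at h2
    omega
  rw [hstep, hA']

end ImGsumAux

open ImGsumAux Finset in
theorem im_Gsum_mod (k n : ℕ) (hk : 0 < k) (hn : 0 < n) :
    (¬(n % 4 = 2 ∧ Odd k ∧ 1 < k) → (n : ℤ) ∣ (Gsum k n).im) ∧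
    (n % 4 = 2 ∧ Odd k ∧ 1 < k → (n : ℤ) ∣ (Gsum k n).im - ((n / 2 : ℕ) : ℤ)) := by
  have him : (Gsum k n).im = ∑ a ∈ Icc 1 n, ∑ b ∈ Icc 1 n, g k a b := by
    rw [Gsum, im_sum]
    exact Finset.sum_congr rfl fun a _ => im_sum _ _
  by_cases h2n : 2 ∣ n
  · -- even case
    set m := n / 2 with hmdef
    have hn2 : n = 2 * m := by omega
    have hm1 : 0 < m := by omega
    -- central congruence: Im(Gsum) ≡ m * J mod n
    have hI : (n : ℤ) ∣ (Gsum k n).im - (m : ℤ) * J k n m := by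
      have h1 : (n : ℤ) ∣ ∑ a ∈ Icc 1 n, ((∑ b ∈ Icc 1 n, g k a b) - g k a m) := by
        apply Finset.dvd_sum
        intro a _
        have := row_reduce hn k a
        rwa [if_pos h2n] at this
      rw [Finset.sum_sub_distrib, I_eq k n m] at h1
      rwa [him]
    have hdvd_of_even : 2 ∣ J k n m → (n : ℤ) ∣ (Gsum k n).im := by
      intro hJ
      obtain ⟨c, hc⟩ := hJ
      have : (Gsum k n).im = ((Gsum k n).im - (m : ℤ) * J k n m) + (n : ℤ) * c := by
        rw [hc, hn2]; push_cast; ring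
      rw [this]
      exact dvd_add hI (Dvd.intro c rfl)
    constructor
    · intro hexc
      by_cases hm2 : 2 ∣ m
      · -- 4 ∣ n
        apply hdvd_of_even
        exact_mod_cast (ZMod.intCast_zmod_eq_zero_iff_dvd (J k n m) 2).mp (J_even_case hn2 hm2)
      · -- n ≡ 2 mod 4
        have hn4 : n % 4 = 2 := by omega
        have hkk : ¬(Odd k ∧ 1 < k) := fun h => hexc ⟨hn4, h⟩
        apply hdvd_of_even
        have hz : ((J k n m : ℤ) : ZMod 2) = 0 := by
          rw [J_odd_case hk hn2 hm2]
          by_cases hok : Odd k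
          · have hk1 : k = 1 := by
              rcases Nat.lt_or_ge k 2 with h | h
              · omega
              · exact absurd ⟨hok, by omega⟩ hkk
            subst hk1
            norm_num
          · have hk2 : 2 ≤ k := by
              rw [Nat.not_odd_iff_even, Nat.even_iff] at hok
              omega
            rw [if_neg hok, sub_zero]
            push_cast
            rw [show ((2 : ZMod 2)) = 0 from rfl, zero_pow (by omega : k - 1 ≠ 0)]
        exact_mod_cast (ZMod.intCast_zmod_eq_zero_iff_dvd (J k n m) 2).mp hz
    · rintro ⟨hn4, hok, hk1⟩
      have hm2 : ¬ 2 ∣ m := by omega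
      have hJ1 : ((J k n m : ℤ) : ZMod 2) = 1 := by
        rw [J_odd_case hk hn2 hm2, if_pos hok]
        push_cast
        rw [show ((2 : ZMod 2)) = 0 from rfl, zero_pow (by omega : k - 1 ≠ 0)]
        decide
      have hJm1 : 2 ∣ J k n m - 1 := by
        have hz : ((J k n m - 1 : ℤ) : ZMod 2) = 0 := by
          push_cast
          rw [hJ1]
          decide
        exact_mod_cast (ZMod.intCast_zmod_eq_zero_iff_dvd (J k n m - 1) 2).mp hz
      obtain ⟨c, hc⟩ := hJm1
      have : (Gsum k n).im - ((n / 2 : ℕ) : ℤ)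
          = ((Gsum k n).im - (m : ℤ) * J k n m) + (n : ℤ) * c := by
        have hJc : (J k n m : ℤ) = 2 * c + 1 := by omega
        rw [← hmdef, hJc, hn2]
        push_cast
        ring
      rw [this]
      exact dvd_add hI (Dvd.intro c rfl)
  · -- odd case
    have hmain : (n : ℤ) ∣ (Gsum k n).im := by
      rw [him]
      apply Finset.dvd_sum
      intro a _
      have := row_reduce hn k a
      rwa [if_neg h2n, sub_zero] at this
    exact ⟨fun _ => hmain, fun h => absurd h (by omega)⟩
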